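/- For all integers m ≥ 1 and all positive integers r, V_m(r) = (1/(2(m+1))) · ∑_{j=0}^{m+1} C(m+1, j) · 2^j · (1 − (−1)^{m+1−j}) · S_j(r), where S_0(r) = 0 and S_j(r) = j · ∑_{n=1}^{r} J_{j−1}(n) for j ≥ 1. -/

import Mathlib

open Finset ArithmeticFunction
open scoped ArithmeticFunction.Moebius ArithmeticFunction.zeta

/-- Jordan totient: number of `m`-tuples `x` with `1 ≤ xᵢ ≤ n` and `gcd(x₁,…,x_m,n) = 1`. -/
def J (m n : ℕ) : ℕ :=
  ((Fintype.piFinset fun _ : Fin m => Finset.Icc (1 : ℕ) n).filter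
    fun x => Nat.gcd (Finset.univ.gcd x) n = 1).card

/-- Number of lattice points visible from the origin in `[-r, r]^m`. -/
noncomputable def Vm (m r : ℕ) : ℕ :=
  ((Fintype.piFinset fun _ : Fin m => Finset.Icc (-(r : ℤ)) (r : ℤ)).filter
    fun x => Finset.univ.gcd x = 1).card

/-- `S j r = j * ∑_{n=1}^r J_{j-1}(n)` for `j ≥ 1`, and `S 0 r = 0`. -/
def S (j r : ℕ) : ℕ := j * ∑ n ∈ Finset.Icc 1 r, J (j - 1) n


lemma mu_ind (g : ℕ) : ∑ d ∈ g.divisors, (μ d : ℤ) = if g = 1 then 1 else 0 := by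
  have h : (μ * ζ : ArithmeticFunction ℤ) g = (1 : ArithmeticFunction ℤ) g := by
    rw [moebius_mul_coe_zeta]
  rwa [coe_mul_zeta_apply, one_apply] at h

lemma piFinset_filter_forall {ι : Type*} [Fintype ι] [DecidableEq ι] {α : Type*} [DecidableEq α]
    (s : ι → Finset α) (p : α → Prop) [DecidablePred p] :
    (Fintype.piFinset s).filter (fun x => ∀ i, p (x i)) = Fintype.piFinset (fun i => (s i).filter p) := by
  ext x
  simp [Fintype.mem_piFinset, forall_and]

lemma card_filter_gcd_one {α : Type*} (s : Finset α) (g : α → ℕ) (r : ℕ)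
    (hg : ∀ a ∈ s, 1 ≤ g a ∧ g a ≤ r) :
    ((s.filter fun a => g a = 1).card : ℤ)
      = ∑ d ∈ Icc 1 r, (μ d : ℤ) * ((s.filter fun a => d ∣ g a).card : ℤ) := by
  classical
  have key : ∀ a ∈ s, ((if g a = 1 then 1 else 0 : ℤ))
      = ∑ d ∈ Icc 1 r, if d ∣ g a then (μ d : ℤ) else 0 := by
    intro a ha
    rw [← mu_ind, ← Finset.sum_filter]
    congr 1
    ext d
    simp only [Finset.mem_filter, Finset.mem_Icc, Nat.mem_divisors]
    have h1 := (hg a ha).1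
    have h2 := (hg a ha).2
    constructor
    · rintro ⟨hd, _⟩
      have hd0 : d ≠ 0 := by rintro rfl; rw [zero_dvd_iff] at hd; omega
      exact ⟨⟨by omega, le_trans (Nat.le_of_dvd (by omega) hd) h2⟩, hd⟩
    · rintro ⟨_, hd⟩
      exact ⟨hd, by omega⟩
  rw [Finset.card_filter, Nat.cast_sum]
  push_cast
  rw [Finset.sum_congr rfl key, Finset.sum_comm]
  refine Finset.sum_congr rfl fun d _ => ?_
  rw [Finset.card_filter, Nat.cast_sum, Finset.mul_sum]
  refine Finset.sum_congr rfl fun a _ => ?_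
  split <;> simp
lemma count_nat (n d : ℕ) : ((Icc 1 n).filter fun x => d ∣ x).card = n / d := by
  have h : Icc 1 n = Ioc 0 n := by ext x; simp; omega
  rw [h]
  exact Nat.Ioc_filter_dvd_card_eq_div n d

lemma count_int (r d : ℕ) (hd : 1 ≤ d) :
    ((Icc (-(r:ℤ)) (r:ℤ)).filter fun x => (d:ℤ) ∣ x).card = 2 * (r / d) + 1 := by
  have hd0 : (0:ℤ) < d := by exact_mod_cast hd
  have himg : ((Icc (-(r:ℤ)) (r:ℤ)).filter fun x => (d:ℤ) ∣ x)
      = (Icc (-((r/d : ℕ):ℤ)) ((r/d : ℕ):ℤ)).image (fun t => (d:ℤ) * t) := by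
    ext x
    simp only [mem_filter, mem_Icc, mem_image]
    constructor
    · rintro ⟨⟨h1, h2⟩, t, rfl⟩
      refine ⟨t, ⟨?_, ?_⟩, rfl⟩
      · rw [Int.natCast_div, neg_le, Int.le_ediv_iff_mul_le hd0]
        linarith
      · rw [Int.natCast_div, Int.le_ediv_iff_mul_le hd0]
        linarith
    · rintro ⟨t, ⟨h1, h2⟩, rfl⟩
      rw [Int.natCast_div, Int.le_ediv_iff_mul_le hd0] at h2
      rw [Int.natCast_div, neg_le, Int.le_ediv_iff_mul_le hd0] at h1
      exact ⟨⟨by linarith, by linarith⟩, ⟨t, rfl⟩⟩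
  rw [himg, Finset.card_image_of_injective _ (mul_right_injective₀ (by positivity)), Int.card_Icc]
  omega
lemma finset_gcd_nonneg {ι : Type*} (s : Finset ι) (f : ι → ℤ) : 0 ≤ s.gcd f := by
  classical
  induction s using Finset.induction_on with
  | empty => simp
  | insert h ih =>
    rw [Finset.gcd_insert, ← Int.coe_gcd]
    exact Int.natCast_nonneg _

lemma Vm_moebius (m r : ℕ) :
    (Vm m r : ℤ) = ∑ d ∈ Icc 1 r, (μ d : ℤ) * ((2 * ((r:ℕ) / d) + 1 : ℤ) ^ m - 1) := by
  classical
  set box := Fintype.piFinset fun _ : Fin m => Finset.Icc (-(r : ℤ)) (r : ℤ) with hbox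
  set s := box.filter (fun x => x ≠ 0) with hs
  set g : (Fin m → ℤ) → ℕ := fun x => (Finset.univ.gcd x).natAbs with hgdef
  have hzero_box : (0 : Fin m → ℤ) ∈ box := by
    simp [hbox, Fintype.mem_piFinset]
  have hVm : (Vm m r : ℤ) = ((s.filter fun x => g x = 1).card : ℤ) := by
    congr 1
    rw [Vm, hs, Finset.filter_filter]
    congr 1
    apply Finset.filter_congr
    intro x hx
    constructor
    · intro h
      have hx0 : x ≠ 0 := by
        rintro rfl
        rw [Finset.gcd_eq_zero_iff.mpr (by intro i _; rfl)] at h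
        exact absurd h (by norm_num)
      exact ⟨hx0, by rw [hgdef]; simp [h]⟩
    · rintro ⟨hx0, h1⟩
      have hnn := finset_gcd_nonneg (Finset.univ) x
      have := Int.natAbs_of_nonneg hnn
      rw [hgdef] at h1
      simp only at h1
      omega
  have hg : ∀ x ∈ s, 1 ≤ g x ∧ g x ≤ r := by
    intro x hx
    rw [hs, Finset.mem_filter] at hx
    obtain ⟨hxb, hx0⟩ := hx
    obtain ⟨i, hi⟩ := Function.ne_iff.mp hx0
    have hdvd : Finset.univ.gcd x ∣ x i := Finset.gcd_dvd (Finset.mem_univ i)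
    have hdvd' : (Finset.univ.gcd x).natAbs ∣ (x i).natAbs := Int.natAbs_dvd_natAbs.mpr hdvd
    have hxi : (x i).natAbs ≠ 0 := by simpa using hi
    have h1 : 1 ≤ g x := by
      rcases Nat.eq_zero_or_pos (g x) with h | h
      · rw [hgdef] at h; simp only at h
        rw [Int.natAbs_eq_zero] at h
        rw [h] at hdvd
        exact absurd (zero_dvd_iff.mp hdvd) hi
      · exact h
    have hxir : (x i).natAbs ≤ r := by
      rw [hbox, Fintype.mem_piFinset] at hxb
      have := hxb i
      rw [Finset.mem_Icc] at this
      omega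
    exact ⟨h1, le_trans (Nat.le_of_dvd (Nat.pos_of_ne_zero hxi) hdvd') hxir⟩
  rw [hVm, card_filter_gcd_one s g r hg]
  refine Finset.sum_congr rfl fun d hd => ?_
  rw [Finset.mem_Icc] at hd
  congr 1
  -- card of filter = (2*(r/d)+1)^m - 1
  have hpred : ∀ x, (d ∣ g x ↔ ∀ i, (d:ℤ) ∣ x i) := by
    intro x
    rw [hgdef]
    simp only
    rw [← Int.natAbs_natCast d, Int.natAbs_dvd_natAbs, Finset.dvd_gcd_iff]
    exact ⟨fun h i => h i (Finset.mem_univ i), fun h i _ => h i⟩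
  have hA : (box.filter fun x => ∀ i, (d:ℤ) ∣ x i).card = (2 * (r / d) + 1) ^ m := by
    have h2 := congrArg Finset.card
      (piFinset_filter_forall (fun _ : Fin m => Icc (-(r:ℤ)) (r:ℤ)) (fun y => (d:ℤ) ∣ y))
    rw [hbox]
    calc (Finset.filter (fun x => ∀ i, (d:ℤ) ∣ x i)
          (Fintype.piFinset fun _ : Fin m => Icc (-(r:ℤ)) (r:ℤ))).card
        = (Fintype.piFinset fun _ : Fin m => (Icc (-(r:ℤ)) (r:ℤ)).filter fun y => (d:ℤ) ∣ y).card := by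
          convert h2 using 2
          ext x
          simp [Finset.mem_filter]
      _ = (2 * (r / d) + 1) ^ m := by
          rw [Fintype.card_piFinset]
          simp [count_int r d hd.1]
  have hfe : (s.filter fun x => d ∣ g x)
      = (box.filter fun x => ∀ i, (d:ℤ) ∣ x i).erase 0 := by
    ext x
    rw [hs]
    simp only [Finset.mem_filter, Finset.mem_erase, hpred x]
    tauto
  have h0A : (0 : Fin m → ℤ) ∈ (box.filter fun x => ∀ i, (d:ℤ) ∣ x i) := by
    rw [Finset.mem_filter]
    exact ⟨hzero_box, fun i => by simp⟩
  rw [hfe, Finset.card_erase_of_mem h0A, hA]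
  have : 1 ≤ (2 * (r / d) + 1) ^ m := Nat.one_le_pow m (2 * (r / d) + 1) (Nat.succ_pos _)
  push_cast [Nat.cast_sub this]
  ring
lemma J_moebius (k n : ℕ) (hn : 1 ≤ n) :
    (J k n : ℤ) = ∑ d ∈ n.divisors, (μ d : ℤ) * ((n / d : ℕ) : ℤ) ^ k := by
  classical
  set g : (Fin k → ℕ) → ℕ := fun x => Nat.gcd (Finset.univ.gcd x) n with hgdef
  have hg : ∀ x ∈ (Fintype.piFinset fun _ : Fin k => Finset.Icc (1 : ℕ) n), 1 ≤ g x ∧ g x ≤ n :=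
    fun x _ => ⟨Nat.gcd_pos_of_pos_right _ hn, Nat.le_of_dvd hn (Nat.gcd_dvd_right _ _)⟩
  rw [J, card_filter_gcd_one _ g n hg]
  have hdiv : n.divisors = (Icc 1 n).filter (· ∣ n) := by
    ext d
    simp only [Nat.mem_divisors, Finset.mem_filter, Finset.mem_Icc]
    constructor
    · rintro ⟨hd, _⟩
      have hd0 : d ≠ 0 := by rintro rfl; rw [zero_dvd_iff] at hd; omega
      exact ⟨⟨by omega, Nat.le_of_dvd (by omega) hd⟩, hd⟩
    · rintro ⟨_, hd⟩; exact ⟨hd, by omega⟩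
  rw [hdiv, Finset.sum_filter]
  refine Finset.sum_congr rfl fun d hd => ?_
  rw [Finset.mem_Icc] at hd
  by_cases hdn : d ∣ n
  · simp only [hdn, if_true]
    have hpred : ∀ x : Fin k → ℕ, (d ∣ g x ↔ ∀ i, d ∣ x i) := by
      intro x
      rw [hgdef]
      simp only
      rw [Nat.dvd_gcd_iff, Finset.dvd_gcd_iff]
      exact ⟨fun h i => h.1 i (Finset.mem_univ i), fun h => ⟨fun i _ => h i, hdn⟩⟩
    have h2 := congrArg Finset.card
      (piFinset_filter_forall (fun _ : Fin k => Icc (1:ℕ) n) (fun y => d ∣ y))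
    have hcard : ((Fintype.piFinset fun _ : Fin k => Finset.Icc (1:ℕ) n).filter
        fun x => d ∣ g x).card = (n / d) ^ k := by
      calc ((Fintype.piFinset fun _ : Fin k => Finset.Icc (1:ℕ) n).filter fun x => d ∣ g x).card
          = ((Fintype.piFinset fun _ : Fin k => Finset.Icc (1:ℕ) n).filter fun x => ∀ i, d ∣ x i).card := by
            apply congrArg
            apply Finset.filter_congr
            intro x _
            simp only [hpred x]
        _ = (Fintype.piFinset fun _ : Fin k => (Icc (1:ℕ) n).filter fun y => d ∣ y).card := by
            convert h2 using 2
            ext x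
            simp [Finset.mem_filter]
        _ = (n / d) ^ k := by
            rw [Fintype.card_piFinset]
            simp [count_nat]
    rw [hcard]
    push_cast
    ring
  · simp only [hdn, if_false]
    convert mul_zero _
    rw [Nat.cast_eq_zero, Finset.card_eq_zero, Finset.filter_eq_empty_iff]
    intro x _
    rw [hgdef]
    simp only
    rw [Nat.dvd_gcd_iff]
    tauto

lemma swap_divisors (r : ℕ) (f : ℕ → ℕ → ℤ) :
    ∑ n ∈ Icc 1 r, ∑ d ∈ n.divisors, f d (n / d)
      = ∑ d ∈ Icc 1 r, ∑ q ∈ Icc 1 (r / d), f d q := by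
  rw [Finset.sum_sigma', Finset.sum_sigma']
  apply Finset.sum_nbij' (fun p => (⟨p.2, p.1 / p.2⟩ : Σ _ : ℕ, ℕ))
    (fun p => (⟨p.1 * p.2, p.1⟩ : Σ _ : ℕ, ℕ))
  · rintro ⟨n, d⟩ hp
    simp only [Finset.mem_sigma, Finset.mem_Icc, Nat.mem_divisors] at hp ⊢
    obtain ⟨⟨hn1, hnr⟩, hd, hn0⟩ := hp
    have hd0 : d ≠ 0 := by rintro rfl; rw [zero_dvd_iff] at hd; omega
    refine ⟨⟨by omega, le_trans (Nat.le_of_dvd (by omega) hd) hnr⟩, ?_, ?_⟩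
    · rw [Nat.one_le_div_iff (by omega)]
      exact Nat.le_of_dvd (by omega) hd
    · exact Nat.div_le_div_right hnr
  · rintro ⟨d, q⟩ hp
    simp only [Finset.mem_sigma, Finset.mem_Icc, Nat.mem_divisors] at hp ⊢
    obtain ⟨⟨hd1, hdr⟩, hq1, hqr⟩ := hp
    have hmul : d * q ≤ r := by
      calc d * q ≤ d * (r / d) := Nat.mul_le_mul_left d hqr
        _ = (r / d) * d := mul_comm _ _
        _ ≤ r := Nat.div_mul_le_self r d
    have hdq : d * q ≠ 0 := Nat.mul_ne_zero (by omega) (by omega)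
    exact ⟨⟨by omega, hmul⟩, dvd_mul_right d q, hdq⟩
  · rintro ⟨n, d⟩ hp
    simp only [Finset.mem_sigma, Finset.mem_Icc, Nat.mem_divisors] at hp
    obtain ⟨_, hd, hn0⟩ := hp
    simp only [Sigma.mk.inj_iff, heq_eq_eq]
    exact ⟨Nat.mul_div_cancel' hd, trivial⟩
  · rintro ⟨d, q⟩ hp
    simp only [Finset.mem_sigma, Finset.mem_Icc] at hp
    simp only [Sigma.mk.inj_iff, heq_eq_eq]
    exact ⟨trivial, Nat.mul_div_cancel_left q (by omega)⟩
  · rintro ⟨n, d⟩ hp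
    simp only [Finset.mem_sigma, Finset.mem_Icc, Nat.mem_divisors] at hp
    rfl
lemma telesc (m N : ℕ) :
    ∑ q ∈ Icc 1 N, ((2 * (q:ℝ) + 1) ^ m - (2 * (q:ℝ) - 1) ^ m)
      = (2 * (N:ℝ) + 1) ^ m - 1 := by
  rw [← Finset.Ico_add_one_right_eq_Icc, Finset.sum_Ico_eq_sum_range]
  have h : ∀ i ∈ Finset.range (N + 1 - 1),
      ((2 * ((1 + i : ℕ):ℝ) + 1) ^ m - (2 * ((1 + i : ℕ):ℝ) - 1) ^ m)
        = (fun i : ℕ => (2 * (i:ℝ) + 1) ^ m) (i + 1) - (fun i : ℕ => (2 * (i:ℝ) + 1) ^ m) i := by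
    intro i _
    push_cast
    ring_nf
  rw [Finset.sum_congr rfl h, Finset.sum_range_sub (fun i : ℕ => (2 * (i:ℝ) + 1) ^ m)]
  simp

lemma binom_q (m : ℕ) (x : ℝ) :
    ∑ i ∈ Finset.range (m + 1), (m.choose i : ℝ) * (1 - (-1:ℝ) ^ (m - i)) * (2 * x) ^ i
      = (2 * x + 1) ^ m - (2 * x - 1) ^ m := by
  have h1 : (2 * x + 1) ^ m = ∑ i ∈ Finset.range (m + 1), (2*x) ^ i * 1 ^ (m - i) * (m.choose i : ℝ) :=
    add_pow (2*x) 1 m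
  have h2 : (2 * x - 1) ^ m = ∑ i ∈ Finset.range (m + 1), (2*x) ^ i * (-1:ℝ) ^ (m - i) * (m.choose i : ℝ) := by
    have := add_pow (2*x) (-1 : ℝ) m
    simpa [sub_eq_add_neg] using this
  rw [h1, h2, ← Finset.sum_sub_distrib]
  refine Finset.sum_congr rfl fun i _ => ?_
  ring

lemma keyN (m N : ℕ) :
    ∑ j ∈ Finset.range (m + 2), ((m+1).choose j : ℝ) * 2 ^ j * (1 - (-1:ℝ) ^ (m + 1 - j)) *
      ((j:ℝ) * ∑ q ∈ Icc 1 N, (q:ℝ) ^ (j - 1))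
    = 2 * ((m:ℝ)+1) * ((2 * (N:ℝ) + 1) ^ m - 1) := by
  rw [Finset.sum_range_succ']
  simp only [Nat.cast_zero, zero_mul, mul_zero, add_zero]
  have hstep : ∀ i ∈ Finset.range (m + 1),
      ((m+1).choose (i+1) : ℝ) * 2 ^ (i+1) * (1 - (-1:ℝ) ^ (m + 1 - (i+1))) *
        (((i+1 : ℕ):ℝ) * ∑ q ∈ Icc 1 N, (q:ℝ) ^ (i + 1 - 1))
      = ((m:ℝ)+1) * 2 * ∑ q ∈ Icc 1 N, (m.choose i : ℝ) * (1 - (-1:ℝ) ^ (m - i)) * (2 * (q:ℝ)) ^ i := by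
    intro i _
    have hch : ((i:ℝ)+1) * ((m+1).choose (i+1) : ℝ) = ((m:ℝ)+1) * (m.choose i : ℝ) := by
      have := Nat.add_one_mul_choose_eq m i
      have h2 : ((Nat.succ m * m.choose i : ℕ) : ℝ) = (((m+1).choose (i+1) * (i+1) : ℕ) : ℝ) := by
        exact_mod_cast congrArg Nat.cast this
      push_cast at h2
      linarith
    have hsub : m + 1 - (i + 1) = m - i := by omega
    have hsub2 : i + 1 - 1 = i := by omega
    rw [hsub, hsub2, Finset.mul_sum, Finset.mul_sum]
    rw [Finset.mul_sum]
    refine Finset.sum_congr rfl fun q _ => ?_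
    have : (2 * (q:ℝ)) ^ i = 2 ^ i * (q:ℝ) ^ i := by rw [mul_pow]
    rw [this]
    push_cast
    linear_combination 2 ^ (i+1) * (1 - (-1:ℝ) ^ (m - i)) * (q:ℝ) ^ i * hch
  rw [Finset.sum_congr rfl hstep, ← Finset.mul_sum, Finset.sum_comm]
  have : ∀ q ∈ Icc 1 N,
      ∑ i ∈ Finset.range (m + 1), (m.choose i : ℝ) * (1 - (-1:ℝ) ^ (m - i)) * (2 * (q:ℝ)) ^ i
        = (2 * (q:ℝ) + 1) ^ m - (2 * (q:ℝ) - 1) ^ m := fun q _ => binom_q m q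
  rw [Finset.sum_congr rfl this, telesc]
  ring

lemma sumJ_moebius (k r : ℕ) :
    ((∑ n ∈ Icc 1 r, J k n : ℕ) : ℤ)
      = ∑ d ∈ Icc 1 r, (μ d : ℤ) * ∑ q ∈ Icc 1 (r / d), ((q : ℕ) : ℤ) ^ k := by
  push_cast
  rw [Finset.sum_congr rfl (fun n hn => J_moebius k n (Finset.mem_Icc.mp hn).1)]
  rw [swap_divisors r (fun d q => (μ d : ℤ) * ((q : ℕ) : ℤ) ^ k)]
  exact Finset.sum_congr rfl fun d _ => by rw [Finset.mul_sum]

theorem Vm_eq_sum_S (m : ℕ) (hm : 1 ≤ m) (r : ℕ) (hr : 0 < r) :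
    (Vm m r : ℝ) = 1 / (2 * (m + 1)) *
      ∑ j ∈ Finset.range (m + 2),
        ((m + 1).choose j : ℝ) * 2 ^ j * (1 - (-1 : ℝ) ^ (m + 1 - j)) * (S j r : ℝ) := by
  have hS : ∀ j ∈ Finset.range (m + 2), (S j r : ℝ)
      = (j : ℝ) * ∑ d ∈ Icc 1 r, (μ d : ℝ) * ∑ q ∈ Icc 1 (r / d), (q : ℝ) ^ (j - 1) := by
    intro j _
    rcases Nat.eq_zero_or_pos j with rfl | hj
    · simp [S]
    · rw [S]
      push_cast
      congr 1
      have h := congrArg (fun z : ℤ => (z : ℝ)) (sumJ_moebius (j - 1) r)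
      push_cast at h
      exact h
  have hsum : ∑ j ∈ Finset.range (m + 2),
        ((m + 1).choose j : ℝ) * 2 ^ j * (1 - (-1 : ℝ) ^ (m + 1 - j)) * (S j r : ℝ)
      = ∑ d ∈ Icc 1 r, (μ d : ℝ) *
          (2 * ((m : ℝ) + 1) * ((2 * ((r / d : ℕ) : ℝ) + 1) ^ m - 1)) := by
    rw [Finset.sum_congr rfl fun j hj => by rw [hS j hj]]
    have e1 : ∑ j ∈ Finset.range (m + 2),
          ((m + 1).choose j : ℝ) * 2 ^ j * (1 - (-1 : ℝ) ^ (m + 1 - j)) *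
            ((j : ℝ) * ∑ d ∈ Icc 1 r, (μ d : ℝ) * ∑ q ∈ Icc 1 (r / d), (q : ℝ) ^ (j - 1))
        = ∑ j ∈ Finset.range (m + 2), ∑ d ∈ Icc 1 r,
            (μ d : ℝ) * (((m + 1).choose j : ℝ) * 2 ^ j * (1 - (-1 : ℝ) ^ (m + 1 - j)) *
              ((j : ℝ) * ∑ q ∈ Icc 1 (r / d), (q : ℝ) ^ (j - 1))) := by
      refine Finset.sum_congr rfl fun j _ => ?_
      rw [Finset.mul_sum, Finset.mul_sum]
      refine Finset.sum_congr rfl fun d _ => ?_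
      ring
    rw [e1, Finset.sum_comm]
    refine Finset.sum_congr rfl fun d _ => ?_
    rw [← Finset.mul_sum, keyN m (r / d)]
  rw [hsum]
  have hVm : (Vm m r : ℝ) = ∑ d ∈ Icc 1 r, (μ d : ℝ) * ((2 * ((r / d : ℕ) : ℝ) + 1) ^ m - 1) := by
    exact_mod_cast Vm_moebius m r
  have e2 : ∑ d ∈ Icc 1 r, (μ d : ℝ) *
        (2 * ((m : ℝ) + 1) * ((2 * ((r / d : ℕ) : ℝ) + 1) ^ m - 1))
      = 2 * ((m : ℝ) + 1) * ∑ d ∈ Icc 1 r, (μ d : ℝ) * ((2 * ((r / d : ℕ) : ℝ) + 1) ^ m - 1) := by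
    rw [Finset.mul_sum]
    exact Finset.sum_congr rfl fun d _ => by ring
  rw [e2, ← hVm]
  have hne : (2 : ℝ) * ((m : ℝ) + 1) ≠ 0 := by positivity
  field_simp
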